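/- Fix σ > 0, g ∈ ℝᵐ, h ∈ ℝⁿ, and a nonempty closed convex set C ⊆ ℝⁿ with ‖g‖ > dist(h, C). Then the minimum over w ∈ ℝⁿ of √(‖w‖² + σ²)·‖g‖ − ⟨h, w⟩ + sup_{s∈C} ⟨s, w⟩ equals σ·√(‖g‖² − dist(h,C)²), and it is attained at w* = σ·(h − Proj(h,C))/√(‖g‖² − dist(h,C)²), whose squared norm equals σ²·dist(h,C)²/(‖g‖² − dist(h,C)²). -/

import Mathlib

open Metric

/-- The objective `√(‖w‖² + σ²)‖g‖ − ⟨h,w⟩ + sup_{s ∈ C} ⟨s,w⟩` (valued in `EReal`,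
since the support function may be infinite). -/
noncomputable def keyObj {m n : ℕ} (σ : ℝ) (g : EuclideanSpace ℝ (Fin m))
    (C : Set (EuclideanSpace ℝ (Fin n))) (h w : EuclideanSpace ℝ (Fin n)) : EReal :=
  ((Real.sqrt (‖w‖ ^ 2 + σ ^ 2) * ‖g‖ - (inner ℝ h w : ℝ) : ℝ) : EReal) +
    ⨆ s : C, (((inner ℝ (s : EuclideanSpace ℝ (Fin n)) w : ℝ) : EReal))

theorem stmt14 {m n : ℕ} (σ : ℝ) (hσ : 0 < σ) (g : EuclideanSpace ℝ (Fin m))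
    (C : Set (EuclideanSpace ℝ (Fin n))) (hCne : C.Nonempty) (hCcl : IsClosed C)
    (hCconv : Convex ℝ C) (h p : EuclideanSpace ℝ (Fin n)) (hpC : p ∈ C)
    (hproj : ∀ s ∈ C, ‖h - p‖ ≤ ‖h - s‖) (hgd : infDist h C < ‖g‖) :
    (⨅ w : EuclideanSpace ℝ (Fin n), keyObj σ g C h w)
      = ((σ * Real.sqrt (‖g‖ ^ 2 - infDist h C ^ 2) : ℝ) : EReal) ∧
    keyObj σ g C h ((σ / Real.sqrt (‖g‖ ^ 2 - infDist h C ^ 2)) • (h - p))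
      = ((σ * Real.sqrt (‖g‖ ^ 2 - infDist h C ^ 2) : ℝ) : EReal) ∧
    ‖(σ / Real.sqrt (‖g‖ ^ 2 - infDist h C ^ 2)) • (h - p)‖ ^ 2
      = σ ^ 2 * infDist h C ^ 2 / (‖g‖ ^ 2 - infDist h C ^ 2) := by
  haveI := hCne.to_subtype
  have hd : infDist h C = ‖h - p‖ := by
    refine le_antisymm (by simpa [dist_eq_norm] using infDist_le_dist_of_mem hpC) ?_
    rw [infDist_eq_iInf]
    exact le_ciInf fun s => by simpa [dist_eq_norm] using hproj s s.2
  rw [hd] at hgd ⊢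
  set d : ℝ := ‖h - p‖ with hd_def
  have hd0 : 0 ≤ d := norm_nonneg _
  have hG0 : 0 < ‖g‖ := lt_of_le_of_lt hd0 hgd
  have hΔ : 0 < ‖g‖ ^ 2 - d ^ 2 := by nlinarith
  set B : ℝ := Real.sqrt (‖g‖ ^ 2 - d ^ 2) with hB_def
  have hB0 : 0 < B := Real.sqrt_pos.2 hΔ
  have hB2 : B ^ 2 = ‖g‖ ^ 2 - d ^ 2 := Real.sq_sqrt hΔ.le
  -- projection inner product inequality
  have hip : ∀ s ∈ C, (inner ℝ (h - p) (s - p) : ℝ) ≤ 0 := by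
    have hinf : ‖h - p‖ = ⨅ w : C, ‖h - w‖ := by
      refine le_antisymm (le_ciInf fun s => hproj s s.2) ?_
      exact ciInf_le ⟨0, by rintro x ⟨s, rfl⟩; positivity⟩ (⟨p, hpC⟩ : C)
    exact (norm_eq_iInf_iff_real_inner_le_zero hCconv hpC).1 hinf
  set w : EuclideanSpace ℝ (Fin n) := (σ / B) • (h - p) with hw_def
  -- scalar key inequality
  have key : ∀ t : ℝ, 0 ≤ t → σ * B ≤ Real.sqrt (t ^ 2 + σ ^ 2) * ‖g‖ - d * t := by
    intro t ht
    set A : ℝ := Real.sqrt (t ^ 2 + σ ^ 2) with hA_def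
    have hA2 : A ^ 2 = t ^ 2 + σ ^ 2 := Real.sq_sqrt (by positivity)
    have hA0 : 0 < A := Real.sqrt_pos.2 (by positivity)
    have hQ0 : 0 ≤ σ * B + d * t := by positivity
    have hsq : (σ * B + d * t) ^ 2 ≤ (A * ‖g‖) ^ 2 := by
      nlinarith [sq_nonneg (t * B - σ * d)]
    have : σ * B + d * t ≤ A * ‖g‖ := by
      have h1 : σ * B + d * t = Real.sqrt ((σ * B + d * t) ^ 2) := (Real.sqrt_sq hQ0).symm
      have h2 : A * ‖g‖ = Real.sqrt ((A * ‖g‖) ^ 2) := (Real.sqrt_sq (by positivity)).symm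
      rw [h1, h2]; exact Real.sqrt_le_sqrt hsq
    linarith
  -- norm of w
  have hnw : ‖w‖ = (σ / B) * d := by
    rw [hw_def, norm_smul, Real.norm_eq_abs, abs_of_pos (by positivity)]
  -- sup at w equals ⟨p, w⟩
  have hsup : (⨆ s : C, (((inner ℝ (s : EuclideanSpace ℝ (Fin n)) w : ℝ) : EReal)))
      = (((inner ℝ p w : ℝ) : ℝ) : EReal) := by
    refine le_antisymm (iSup_le fun s => ?_) (le_iSup (fun s : C => (((inner ℝ (s : EuclideanSpace ℝ (Fin n)) w : ℝ) : EReal))) (⟨p, hpC⟩ : C))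
    refine EReal.coe_le_coe_iff.2 ?_
    have h1 : (inner ℝ ((s : EuclideanSpace ℝ (Fin n)) - p) w : ℝ) ≤ 0 := by
      rw [hw_def, real_inner_smul_right]
      have := hip s s.2
      rw [real_inner_comm] at this
      exact mul_nonpos_of_nonneg_of_nonpos (by positivity) this
    rw [inner_sub_left] at h1
    linarith
  -- value at w
  have hval : keyObj σ g C h w = ((σ * B : ℝ) : EReal) := by
    rw [keyObj, hsup, ← EReal.coe_add, EReal.coe_eq_coe_iff]
    have hhw : (inner ℝ h w : ℝ) - (inner ℝ p w : ℝ) = (σ / B) * d ^ 2 := by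
      rw [hw_def, ← inner_sub_left, real_inner_smul_right, real_inner_self_eq_norm_sq]
    have hnw2 : ‖w‖ ^ 2 + σ ^ 2 = (σ * ‖g‖ / B) ^ 2 := by
      rw [hnw]; field_simp; nlinarith
    rw [hnw2, Real.sqrt_sq (by positivity)]
    have hx : (inner ℝ h w : ℝ) = (inner ℝ p w : ℝ) + σ / B * d ^ 2 := by linarith
    rw [hx]
    field_simp
    nlinarith
  -- lower bound
  have hlow : ∀ v : EuclideanSpace ℝ (Fin n), ((σ * B : ℝ) : EReal) ≤ keyObj σ g C h v := by
    intro v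
    have h2 : σ * B ≤ (Real.sqrt (‖v‖ ^ 2 + σ ^ 2) * ‖g‖ - (inner ℝ h v : ℝ)) + (inner ℝ p v : ℝ) := by
      have hcs : (inner ℝ (h - p) v : ℝ) ≤ d * ‖v‖ := by
        calc (inner ℝ (h - p) v : ℝ) ≤ ‖h - p‖ * ‖v‖ := real_inner_le_norm _ _
          _ = d * ‖v‖ := rfl
      rw [inner_sub_left] at hcs
      have := key ‖v‖ (norm_nonneg v)
      linarith
    calc ((σ * B : ℝ) : EReal)
        ≤ (((Real.sqrt (‖v‖ ^ 2 + σ ^ 2) * ‖g‖ - (inner ℝ h v : ℝ)) + (inner ℝ p v : ℝ) : ℝ) : EReal) :=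
          EReal.coe_le_coe_iff.2 h2
      _ = ((Real.sqrt (‖v‖ ^ 2 + σ ^ 2) * ‖g‖ - (inner ℝ h v : ℝ) : ℝ) : EReal)
            + (((inner ℝ p v : ℝ) : ℝ) : EReal) := EReal.coe_add _ _
      _ ≤ keyObj σ g C h v := by
          rw [keyObj]
          exact add_le_add_right (le_iSup (fun s : C => (((inner ℝ (s : EuclideanSpace ℝ (Fin n)) v : ℝ) : EReal))) (⟨p, hpC⟩ : C)) _
  refine ⟨le_antisymm ((iInf_le _ w).trans (le_of_eq hval)) (le_iInf hlow), hval, ?_⟩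
  rw [hnw, ← hB2]
  field_simp
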